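/- Let μ be a probability measure on [0,1] with no point masses (i.e., μ({x}) = 0 for every x ∈ [0,1]) and let (v_k)_{k≥1} be a (finite or infinite) sequence of points in [0,1]. Then there exists a sequence (x_k)_{k≥1} in [0,1] such that for every N ≥ 2 (with N at most the length of the sequence in the finite case), the empirical measures satisfy D*_N(μ; (1/N)Σ_{i=1}^N δ_{x_i}) = D*_N(λ; (1/N)Σ_{i=1}^N δ_{v_i}), where λ is Lebesgue measure on [0,1]. -/

import Mathlib

open MeasureTheory Set
open scoped ENNReal

/-- The empirical measure `ν_N = (1/N) ∑_{i=1}^N δ_{x_i}` of the first `N` terms of a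
sequence in `[0,1] ⊆ ℝ`. -/
noncomputable def emp1 (N : ℕ) (x : ℕ → ℝ) : Measure ℝ :=
  (N : ℝ≥0∞)⁻¹ • ∑ i ∈ Finset.range N, Measure.dirac (x i)

/-- The one-dimensional star-discrepancy
`D*(μ;ν) = sup_{0 ≤ b ≤ 1} |μ([0,b)) − ν([0,b))|`. -/
noncomputable def starDisc (μ ν : Measure ℝ) : ℝ :=
  ⨆ b : Icc (0 : ℝ) 1, |(μ (Ico 0 ↑b)).toReal - (ν (Ico 0 ↑b)).toReal|

/-- Let `μ` be a probability measure on `[0,1]` with no point masses and `(v_k)` a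
sequence of points of `[0,1]`. Then there is a sequence `(x_k)` in `[0,1]` such that for
every `N ≥ 2` the star-discrepancy of `(x_k)` with respect to `μ` equals the Lebesgue
star-discrepancy of `(v_k)`. -/
theorem stmt11 (μ : Measure ℝ) [IsProbabilityMeasure μ]
    (hμ : μ ((Icc (0 : ℝ) 1)ᶜ) = 0)
    (hatom : ∀ a ∈ Icc (0 : ℝ) 1, μ {a} = 0)
    (v : ℕ → ℝ) (hv : ∀ k, v k ∈ Icc (0 : ℝ) 1) :
    ∃ x : ℕ → ℝ, (∀ k, x k ∈ Icc (0 : ℝ) 1) ∧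
      ∀ N : ℕ, 2 ≤ N →
        starDisc μ (emp1 N x) =
          starDisc (volume.restrict (Icc (0 : ℝ) 1)) (emp1 N v) := by
  classical
  have hatom' : ∀ a : ℝ, μ {a} = 0 := by
    intro a
    by_cases h : a ∈ Icc (0 : ℝ) 1
    · exact hatom a h
    · exact measure_mono_null (singleton_subset_iff.mpr h) hμ
  -- the "CDF" of μ
  set F : ℝ → ℝ := fun b => (μ (Ico 0 b)).toReal with hFdef
  have hFmono : Monotone F := fun a b hab =>
    ENNReal.toReal_mono (measure_ne_top μ _) (measure_mono (Ico_subset_Ico_right hab))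
  have hF0 : F 0 = 0 := by simp [hFdef]
  have hFnonneg : ∀ b, 0 ≤ F b := fun b => ENNReal.toReal_nonneg
  have hFle1 : ∀ b, F b ≤ 1 := by
    intro b
    have := ENNReal.toReal_mono (measure_ne_top μ univ) (measure_mono (subset_univ (Ico 0 b)))
    simpa using this
  have hIcc1 : μ (Icc (0 : ℝ) 1) = 1 := by
    have h := measure_add_measure_compl (μ := μ) (measurableSet_Icc (a := (0:ℝ)) (b := 1))
    rwa [hμ, add_zero, measure_univ] at h
  have hIco1 : μ (Ico (0 : ℝ) 1) = 1 := by
    have hu : μ (Ico (0:ℝ) 1 ∪ {1}) = μ (Ico (0:ℝ) 1) + μ {1} :=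
      measure_union (disjoint_singleton_right.mpr (by simp)) (measurableSet_singleton 1)
    rw [Ico_union_right zero_le_one, hIcc1, hatom' 1, add_zero] at hu
    exact hu.symm
  -- the quantile function
  set S : ℝ → Set ℝ := fun u => {t : ℝ | t ∈ Icc (0:ℝ) 1 ∧ F t ≤ u} with hSdef
  set g : ℝ → ℝ := fun u => sSup (S u) with hgdef
  have hSne : ∀ u : ℝ, 0 ≤ u → (S u).Nonempty := by
    intro u hu
    exact ⟨0, ⟨le_refl 0, zero_le_one⟩, by rw [hF0]; exact hu⟩
  have hSbdd : ∀ u : ℝ, BddAbove (S u) := fun u => ⟨1, fun t ht => ht.1.2⟩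
  have hg_mem : ∀ u ∈ Icc (0:ℝ) 1, g u ∈ Icc (0:ℝ) 1 := by
    intro u hu
    constructor
    · exact le_csSup (hSbdd u) ⟨⟨le_refl 0, zero_le_one⟩, by rw [hF0]; exact hu.1⟩
    · exact csSup_le (hSne u hu.1) fun t ht => ht.1.2
  -- F (g u) ≤ u
  have hFg_le : ∀ u ∈ Icc (0:ℝ) 1, F (g u) ≤ u := by
    intro u hu
    have hlt : ∀ t : ℝ, t < g u → F t ≤ u := by
      intro t ht
      obtain ⟨r, hr, htr⟩ := exists_lt_of_lt_csSup (hSne u hu.1) ht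
      exact le_trans (hFmono htr.le) hr.2
    set s : ℕ → Set ℝ := fun n => Ico 0 (g u - 1/(n+1)) with hsdef
    have hU : ⋃ n, s n = Ico 0 (g u) := by
      ext t
      simp only [hsdef, mem_iUnion, mem_Ico]
      constructor
      · rintro ⟨n, h0, hlt'⟩
        refine ⟨h0, lt_of_lt_of_le hlt' ?_⟩
        have : (0:ℝ) < 1/(n+1) := by positivity
        linarith
      · rintro ⟨h0, hlt'⟩
        obtain ⟨n, hn⟩ := exists_nat_one_div_lt (show (0:ℝ) < g u - t by linarith)
        exact ⟨n, h0, by linarith⟩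
    have hmono : Monotone s := by
      intro m n hmn
      apply Ico_subset_Ico_right
      have h1 : (1:ℝ)/(n+1) ≤ 1/(m+1) := by
        apply one_div_le_one_div_of_le (by positivity)
        have := (Nat.cast_le (α := ℝ)).mpr hmn
        linarith
      linarith
    have hmeas : μ (Ico 0 (g u)) = ⨆ n, μ (s n) := by
      rw [← hU]
      exact Directed.measure_iUnion hmono.directed_le
    have hbound : ∀ n, μ (s n) ≤ ENNReal.ofReal u := by
      intro n
      have h1 : (0:ℝ) < 1/((n:ℝ)+1) := by positivity
      have h2 : F (g u - 1/(n+1)) ≤ u := hlt _ (by linarith)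
      exact (ENNReal.le_ofReal_iff_toReal_le (measure_ne_top μ _) hu.1).mpr h2
    have : μ (Ico 0 (g u)) ≤ ENNReal.ofReal u := by
      rw [hmeas]; exact iSup_le hbound
    have := ENNReal.toReal_mono ENNReal.ofReal_ne_top this
    rwa [ENNReal.toReal_ofReal hu.1] at this
  -- u ≤ F (g u)
  have hFg_ge : ∀ u ∈ Icc (0:ℝ) 1, u ≤ F (g u) := by
    intro u hu
    have key : ∀ t : ℝ, g u < t → ENNReal.ofReal u ≤ μ (Ico 0 t) := by
      intro t ht
      by_cases h1 : t ≤ 1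
      · have htmem : t ∈ Icc (0:ℝ) 1 := ⟨le_trans (hg_mem u hu).1 ht.le, h1⟩
        have hnot : ¬ F t ≤ u := by
          intro hle
          exact absurd (le_csSup (hSbdd u) ⟨htmem, hle⟩) (not_le.mpr ht)
        calc ENNReal.ofReal u ≤ ENNReal.ofReal (F t) :=
              ENNReal.ofReal_le_ofReal (le_of_lt (not_le.1 hnot))
          _ = μ (Ico 0 t) := ENNReal.ofReal_toReal (measure_ne_top μ _)
      · calc ENNReal.ofReal u ≤ 1 := ENNReal.ofReal_le_one.mpr hu.2
          _ = μ (Ico 0 1) := hIco1.symm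
          _ ≤ μ (Ico 0 t) := measure_mono (Ico_subset_Ico_right (le_of_not_ge h1))
    set s : ℕ → Set ℝ := fun n => Ico 0 (g u + 1/(n+1)) with hsdef
    have hI : ⋂ n, s n = Icc 0 (g u) := by
      ext t
      simp only [hsdef, mem_iInter, mem_Ico, mem_Icc]
      constructor
      · intro h
        refine ⟨(h 0).1, ?_⟩
        by_contra hc
        push_neg at hc
        obtain ⟨n, hn⟩ := exists_nat_one_div_lt (show (0:ℝ) < t - g u by linarith)
        have := (h n).2
        linarith
      · rintro ⟨h0, hle⟩ n
        have : (0:ℝ) < 1/((n:ℝ)+1) := by positivity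
        exact ⟨h0, by linarith⟩
    have hanti : Antitone s := by
      intro m n hmn
      apply Ico_subset_Ico_right
      have h1 : (1:ℝ)/(n+1) ≤ 1/(m+1) := by
        apply one_div_le_one_div_of_le (by positivity)
        have := (Nat.cast_le (α := ℝ)).mpr hmn
        linarith
      linarith
    have hmeas : μ (Icc 0 (g u)) = ⨅ n, μ (s n) := by
      rw [← hI]
      exact Directed.measure_iInter
        (fun n => measurableSet_Ico.nullMeasurableSet)
        hanti.directed_ge ⟨0, measure_ne_top μ _⟩
    have hbound : ENNReal.ofReal u ≤ μ (Icc 0 (g u)) := by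
      rw [hmeas]
      refine le_iInf fun n => key _ ?_
      have : (0:ℝ) < 1/((n:ℝ)+1) := by positivity
      linarith
    have hIccIco : μ (Icc 0 (g u)) = μ (Ico 0 (g u)) := by
      have hu2 : μ (Ico 0 (g u) ∪ {g u}) = μ (Ico 0 (g u)) + μ {g u} :=
        measure_union (disjoint_singleton_right.mpr (by simp)) (measurableSet_singleton _)
      rw [Ico_union_right (hg_mem u hu).1, hatom' (g u), add_zero] at hu2
      exact hu2
    rw [hIccIco] at hbound
    have := ENNReal.toReal_mono (measure_ne_top μ _) hbound
    rwa [ENNReal.toReal_ofReal hu.1] at this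
  have hFg : ∀ u ∈ Icc (0:ℝ) 1, F (g u) = u := fun u hu =>
    le_antisymm (hFg_le u hu) (hFg_ge u hu)
  -- the key equivalence
  have hkey : ∀ u ∈ Icc (0:ℝ) 1, ∀ b ∈ Icc (0:ℝ) 1, (g u < b ↔ u < F b) := by
    intro u hu b hb
    constructor
    · intro h
      by_contra hc
      push_neg at hc
      exact absurd (le_csSup (hSbdd u) ⟨hb, hc⟩) (not_le.mpr h)
    · intro h
      by_contra hc
      push_neg at hc
      have : F b ≤ F (g u) := hFmono hc
      rw [hFg u hu] at this
      exact absurd h (not_lt.mpr this)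
  refine ⟨fun k => g (v k), fun k => hg_mem (v k) (hv k), ?_⟩
  intro N _
  have hFb_mem : ∀ b : ℝ, F b ∈ Icc (0:ℝ) 1 := fun b => ⟨hFnonneg b, hFle1 b⟩
  -- counting identity
  have hcount : ∀ b ∈ Icc (0:ℝ) 1,
      emp1 N (fun k => g (v k)) (Ico 0 b) = emp1 N v (Ico 0 (F b)) := by
    intro b hb
    unfold emp1
    rw [Measure.smul_apply, Measure.smul_apply]
    congr 1
    rw [Measure.finset_sum_apply, Measure.finset_sum_apply]
    refine Finset.sum_congr rfl fun i _ => ?_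
    rw [Measure.dirac_apply' _ measurableSet_Ico, Measure.dirac_apply' _ measurableSet_Ico]
    have hiff : g (v i) ∈ Ico (0:ℝ) b ↔ v i ∈ Ico (0:ℝ) (F b) := by
      rw [mem_Ico, mem_Ico]
      constructor
      · rintro ⟨-, h⟩
        exact ⟨(hv i).1, (hkey (v i) (hv i) b hb).mp h⟩
      · rintro ⟨-, h⟩
        exact ⟨(hg_mem (v i) (hv i)).1, (hkey (v i) (hv i) b hb).mpr h⟩
    simp only [indicator_apply]
    exact if_congr hiff rfl rfl
  -- Lebesgue side
  have hvol : ∀ c ∈ Icc (0:ℝ) 1,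
      ((volume.restrict (Icc (0:ℝ) 1)) (Ico 0 c)).toReal = c := by
    intro c hc
    have hsub : Ico (0:ℝ) c ⊆ Icc (0:ℝ) 1 := fun t ht => ⟨ht.1, le_trans ht.2.le hc.2⟩
    rw [Measure.restrict_apply measurableSet_Ico,
      inter_eq_self_of_subset_left hsub,
      Real.volume_Ico, sub_zero, ENNReal.toReal_ofReal hc.1]
  -- conclude
  set h : Icc (0:ℝ) 1 → ℝ := fun c => |(c:ℝ) - (emp1 N v (Ico 0 (c:ℝ))).toReal| with hhdef
  set φ : Icc (0:ℝ) 1 → Icc (0:ℝ) 1 := fun b => ⟨F (b:ℝ), hFb_mem b⟩ with hφdef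
  have hsurj : Function.Surjective φ := by
    intro c
    exact ⟨⟨g (c:ℝ), hg_mem _ c.2⟩, Subtype.ext (hFg _ c.2)⟩
  have hL : (fun b : Icc (0:ℝ) 1 =>
      |(μ (Ico 0 (b:ℝ))).toReal - (emp1 N (fun k => g (v k)) (Ico 0 (b:ℝ))).toReal|)
      = h ∘ φ := by
    funext b
    simp only [hhdef, hφdef, Function.comp_apply]
    rw [hcount (b:ℝ) b.2]
  have hR : (fun c : Icc (0:ℝ) 1 =>
      |((volume.restrict (Icc (0:ℝ) 1)) (Ico 0 (c:ℝ))).toReal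
        - (emp1 N v (Ico 0 (c:ℝ))).toReal|) = h := by
    funext c
    simp only [hhdef]
    rw [hvol (c:ℝ) c.2]
  unfold starDisc
  rw [hL, hR, iSup, iSup, hsurj.range_comp h]
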